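/- Let $g \in W^{1,1}_{loc}(\mathbb{R}^n)$ with $|\nabla g| \in L^1_{loc}$. Let $P_t$ be convolution with $\varphi_t(x) = t^{-n}\varphi(x/t)$, where $\varphi$ is bounded, supported in $B(0,C)$, and $\int \varphi = 1$. Let $E_t$ be the dyadic averaging operator $E_t g(x) = \fint_{Q_{x,t}} g$, where $Q_{x,t}$ is the unique dyadic cube of side length in $(t/2, t]$ containing $x$. Then for a.e. $x \in \mathbb{R}^n$ and all $t > 0$: $|(E_t - P_t) g(x)| \le C' t \, \mathcal{M}(|\nabla g|)(x)$, where $\mathcal{M}$ is the Hardy–Littlewood maximal function and $C'$ depends on $n, C, \|\varphi\|_\infty$. -/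

import Mathlib

open MeasureTheory Metric ENNReal

/-- The dyadic cube containing `x` with side length in `(t/2, t]`. -/
def dyadicCube (n : ℕ) (t : ℝ) (x : Fin n → ℝ) : Set (Fin n → ℝ) :=
  {y | ∀ i, ⌊x i / (2 : ℝ) ^ Int.log 2 t⌋ = ⌊y i / (2 : ℝ) ^ Int.log 2 t⌋}

/-- The (uncentered-over-centered) Hardy–Littlewood maximal function. -/
noncomputable def hlMax (n : ℕ) (g : (Fin n → ℝ) → ℝ) (x : Fin n → ℝ) : ℝ≥0∞ :=
  ⨆ (r : ℝ) (_ : 0 < r),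
    (∫⁻ y in ball x r, ENNReal.ofReal |g y|) / volume (ball x r)

open Set

lemma seg_bound {n : ℕ} (g : (Fin n → ℝ) → ℝ) (hg : Differentiable ℝ g) (x z : Fin n → ℝ) :
    ENNReal.ofReal |g z - g x| ≤ ENNReal.ofReal ‖z - x‖ *
      ∫⁻ s in Set.Ioc (0:ℝ) 1, ENNReal.ofReal ‖fderiv ℝ g (x + s • (z - x))‖ := by
  rcases eq_or_ne z x with rfl | hzx
  · simp
  set v := z - x with hv_def
  have hv : v ≠ 0 := sub_ne_zero.mpr hzx
  set c : ℝ → (Fin n → ℝ) := fun s => x + s • v with hc_def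
  have hder : ∀ s : ℝ, HasDerivAt (fun s => g (c s)) (fderiv ℝ g (c s) v) s := by
    intro s
    have h1 : HasDerivAt c v s := by
      have := ((hasDerivAt_id s).smul_const v).const_add x
      simp only [one_smul] at this
      exact this
    exact (hg (c s)).hasFDerivAt.comp_hasDerivAt s h1
  by_cases hfin : (∫⁻ s in Set.Ioc (0:ℝ) 1, ENNReal.ofReal ‖fderiv ℝ g (c s)‖) = ⊤
  · have hne : ENNReal.ofReal ‖v‖ ≠ 0 := by
      simp only [ne_eq, ENNReal.ofReal_eq_zero, not_le]
      exact norm_pos_iff.mpr hv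
    rw [hfin, ENNReal.mul_top hne]
    exact le_top
  · have hmeasD : Measurable fun s => fderiv ℝ g (c s) v :=
      (measurable_fderiv_apply_const ℝ g v).comp (by fun_prop)
    have hptw : ∀ s : ℝ, (‖fderiv ℝ g (c s) v‖₊ : ℝ≥0∞) ≤
        ENNReal.ofReal ‖fderiv ℝ g (c s)‖ * ENNReal.ofReal ‖v‖ := by
      intro s
      rw [← enorm_eq_nnnorm, ← ofReal_norm, ← ENNReal.ofReal_mul (norm_nonneg _)]
      exact ENNReal.ofReal_le_ofReal ((fderiv ℝ g (c s)).le_opNorm v)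
    have hfi : IntegrableOn (fun s => fderiv ℝ g (c s) v) (Set.Ioc (0:ℝ) 1) := by
      refine ⟨hmeasD.aestronglyMeasurable.restrict, ?_⟩
      rw [HasFiniteIntegral]
      calc ∫⁻ s in Set.Ioc (0:ℝ) 1, (‖fderiv ℝ g (c s) v‖₊ : ℝ≥0∞)
          ≤ ∫⁻ s in Set.Ioc (0:ℝ) 1, ENNReal.ofReal ‖fderiv ℝ g (c s)‖ * ENNReal.ofReal ‖v‖ :=
            lintegral_mono fun s => hptw s
        _ = (∫⁻ s in Set.Ioc (0:ℝ) 1, ENNReal.ofReal ‖fderiv ℝ g (c s)‖) * ENNReal.ofReal ‖v‖ :=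
            lintegral_mul_const' _ _ (by simp)
        _ < ⊤ := ENNReal.mul_lt_top (lt_top_iff_ne_top.mpr hfin) ofReal_lt_top
    have hFTC : ∫ s in Set.Ioc (0:ℝ) 1, fderiv ℝ g (c s) v = g z - g x := by
      have h2 : ∫ s in (0:ℝ)..1, fderiv ℝ g (c s) v = g (c 1) - g (c 0) :=
        intervalIntegral.integral_eq_sub_of_hasDerivAt (fun s _ => hder s)
          (by rwa [intervalIntegrable_iff_integrableOn_Ioc_of_le zero_le_one])
      rw [← intervalIntegral.integral_of_le zero_le_one, h2]
      simp [hc_def, hv_def]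
    calc ENNReal.ofReal |g z - g x| = (‖g z - g x‖₊ : ℝ≥0∞) := by
          rw [← enorm_eq_nnnorm, ← ofReal_norm, Real.norm_eq_abs]
      _ = ‖∫ s in Set.Ioc (0:ℝ) 1, fderiv ℝ g (c s) v‖₊ := by rw [hFTC]
      _ ≤ ∫⁻ s in Set.Ioc (0:ℝ) 1, (‖fderiv ℝ g (c s) v‖₊ : ℝ≥0∞) :=
          enorm_integral_le_lintegral_enorm _
      _ ≤ ∫⁻ s in Set.Ioc (0:ℝ) 1, ENNReal.ofReal ‖fderiv ℝ g (c s)‖ * ENNReal.ofReal ‖v‖ :=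
          lintegral_mono fun s => hptw s
      _ = ENNReal.ofReal ‖v‖ * ∫⁻ s in Set.Ioc (0:ℝ) 1, ENNReal.ofReal ‖fderiv ℝ g (c s)‖ := by
          rw [lintegral_mul_const' _ _ (by simp), mul_comm]

lemma scale_bound {n : ℕ} (F : (Fin n → ℝ) → ℝ≥0∞) (hF : Measurable F) (x : Fin n → ℝ)
    {s r : ℝ} (hs : 0 < s) (hr : 0 < r) :
    ∫⁻ y in ball x r, F (x + s • (y - x)) ≤
      ENNReal.ofReal ((s ^ n)⁻¹) * ∫⁻ w in ball x (s * r), F w := by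
  set a : Fin n → ℝ := x - s • x with ha_def
  set G : (Fin n → ℝ) → ℝ≥0∞ := fun w => (ball x (s*r)).indicator F (a + w) with hG_def
  have hGmeas : Measurable G := (hF.indicator measurableSet_ball).comp (measurable_const_add a)
  have key : ∀ y, (ball x r).indicator (fun y => F (x + s • (y - x))) y ≤ G (s • y) := by
    intro y
    have hxy : a + s • y = x + s • (y - x) := by rw [ha_def, smul_sub]; abel
    by_cases hy : y ∈ ball x r
    · rw [Set.indicator_of_mem hy]
      have hmem : x + s • (y - x) ∈ ball x (s * r) := by
        rw [mem_ball, dist_eq_norm] at hy ⊢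
        have : x + s • (y - x) - x = s • (y - x) := by abel
        rw [this, norm_smul, Real.norm_eq_abs, abs_of_pos hs]
        exact (mul_lt_mul_iff_right₀ hs).mpr hy
      rw [hG_def]
      simp only
      rw [hxy, Set.indicator_of_mem hmem]
    · rw [Set.indicator_of_notMem hy]
      exact zero_le
  have hfr : Module.finrank ℝ (Fin n → ℝ) = n := by simp [Module.finrank_pi]
  calc ∫⁻ y in ball x r, F (x + s • (y - x))
      = ∫⁻ y, (ball x r).indicator (fun y => F (x + s • (y - x))) y := by
        rw [lintegral_indicator measurableSet_ball]
    _ ≤ ∫⁻ y, G (s • y) := lintegral_mono key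
    _ = ∫⁻ w, G w ∂(Measure.map (s • ·) volume) :=
        (lintegral_map hGmeas (measurable_const_smul s)).symm
    _ = ENNReal.ofReal |(s ^ Module.finrank ℝ (Fin n → ℝ))⁻¹| * ∫⁻ w, G w := by
        rw [Measure.map_addHaar_smul volume hs.ne', lintegral_smul_measure, smul_eq_mul]
    _ = ENNReal.ofReal ((s ^ n)⁻¹) * ∫⁻ w in ball x (s * r), F w := by
        congr 1
        · rw [hfr, abs_of_nonneg (inv_nonneg.mpr (pow_nonneg hs.le _))]
        · have := (measurePreserving_add_left volume a).lintegral_comp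
            (f := fun w => (ball x (s*r)).indicator F w) (hF.indicator measurableSet_ball)
          rw [hG_def]
          simp only
          rw [this, lintegral_indicator measurableSet_ball]

lemma max_bound {n : ℕ} (g : (Fin n → ℝ) → ℝ) (hg : Differentiable ℝ g) (x : Fin n → ℝ)
    {r : ℝ} (hr : 0 < r) :
    ∫⁻ y in ball x r, ENNReal.ofReal |g y - g x| ≤
      ENNReal.ofReal (r * (2*r)^n) * hlMax n (fun y => ‖fderiv ℝ g y‖) x := by
  set F : (Fin n → ℝ) → ℝ≥0∞ := fun y => ENNReal.ofReal ‖fderiv ℝ g y‖ with hF_def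
  have hF : Measurable F := ENNReal.measurable_ofReal.comp (measurable_fderiv ℝ g).norm
  set M := hlMax n (fun y => ‖fderiv ℝ g y‖) x with hM_def
  have hball : ∀ ρ : ℝ, 0 < ρ → ∫⁻ w in ball x ρ, F w ≤ ENNReal.ofReal ((2*ρ)^n) * M := by
    intro ρ hρ
    have hvol : volume (ball x ρ) = ENNReal.ofReal ((2*ρ)^n) := by
      rw [Real.volume_pi_ball x hρ, Fintype.card_fin]
    have h1 : (∫⁻ y in ball x ρ, ENNReal.ofReal |‖fderiv ℝ g y‖|) / volume (ball x ρ) ≤ M := by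
      rw [hM_def, hlMax]
      exact le_iSup₂ (f := fun (ρ : ℝ) (_ : 0 < ρ) =>
        (∫⁻ y in ball x ρ, ENNReal.ofReal |‖fderiv ℝ g y‖|) / volume (ball x ρ)) ρ hρ
    have h2 : ∫⁻ w in ball x ρ, F w = ∫⁻ y in ball x ρ, ENNReal.ofReal |‖fderiv ℝ g y‖| := by
      simp [hF_def, abs_norm]
    rw [h2]
    rw [ENNReal.div_le_iff (by rw [hvol]; positivity) (by rw [hvol]; exact ofReal_ne_top)] at h1
    rw [mul_comm, ← hvol]
    exact h1
  calc ∫⁻ y in ball x r, ENNReal.ofReal |g y - g x|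
      ≤ ∫⁻ y in ball x r, ENNReal.ofReal r * ∫⁻ s in Set.Ioc (0:ℝ) 1, F (x + s • (y - x)) := by
        refine setLIntegral_mono' measurableSet_ball fun y hy => ?_
        refine (seg_bound g hg x y).trans ?_
        refine mul_le_mul' (ENNReal.ofReal_le_ofReal ?_) le_rfl
        rw [mem_ball, dist_eq_norm] at hy
        exact hy.le
    _ = ENNReal.ofReal r * ∫⁻ y in ball x r, ∫⁻ s in Set.Ioc (0:ℝ) 1, F (x + s • (y - x)) :=
        lintegral_const_mul' _ _ ofReal_ne_top
    _ = ENNReal.ofReal r * ∫⁻ s in Set.Ioc (0:ℝ) 1, ∫⁻ y in ball x r, F (x + s • (y - x)) := by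
        rw [lintegral_lintegral_swap]
        exact (hF.comp (by fun_prop : Measurable fun p : (Fin n → ℝ) × ℝ =>
          x + p.2 • (p.1 - x))).aemeasurable
    _ ≤ ENNReal.ofReal r * ∫⁻ _ in Set.Ioc (0:ℝ) 1, ENNReal.ofReal ((2*r)^n) * M := by
        refine mul_le_mul' le_rfl (setLIntegral_mono' measurableSet_Ioc fun s hs => ?_)
        have hs0 : 0 < s := hs.1
        refine (scale_bound F hF x hs0 hr).trans ?_
        refine (mul_le_mul' le_rfl (hball (s*r) (mul_pos hs0 hr))).trans ?_
        rw [← mul_assoc, ← ENNReal.ofReal_mul (by positivity)]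
        refine mul_le_mul' (ENNReal.ofReal_le_ofReal (le_of_eq ?_)) le_rfl
        rw [show 2*(s*r) = s*(2*r) by ring, mul_pow, inv_mul_eq_div, mul_comm (s^n) _,
          mul_div_assoc, div_self (pow_ne_zero _ hs0.ne'), mul_one]
    _ = ENNReal.ofReal (r * (2*r)^n) * M := by
        rw [setLIntegral_const, Real.volume_Ioc, ENNReal.ofReal_mul hr.le]
        simp [mul_assoc]

section cube
variable {n : ℕ} {t : ℝ} (x : Fin n → ℝ)

lemma cube_eq (ht : 0 < t) :
    dyadicCube n t x = Set.univ.pi fun i =>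
      Ico ((2:ℝ) ^ Int.log 2 t * ⌊x i / (2:ℝ) ^ Int.log 2 t⌋)
        ((2:ℝ) ^ Int.log 2 t * (⌊x i / (2:ℝ) ^ Int.log 2 t⌋ + 1)) := by
  have hh : (0:ℝ) < (2:ℝ) ^ Int.log 2 t := zpow_pos (by norm_num) _
  set h : ℝ := (2:ℝ) ^ Int.log 2 t
  ext y
  simp only [dyadicCube, mem_setOf_eq, Set.mem_pi, mem_univ, forall_true_left, mem_Ico]
  refine forall_congr' fun i => ?_
  rw [eq_comm, Int.floor_eq_iff, le_div_iff₀ hh, div_lt_iff₀ hh]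
  constructor
  · rintro ⟨h1, h2⟩
    exact ⟨by rw [mul_comm]; exact h1, by rw [mul_comm]; exact h2⟩
  · rintro ⟨h1, h2⟩
    exact ⟨by rw [mul_comm] at h1; exact h1, by rw [mul_comm] at h2; exact h2⟩

lemma cube_vol (ht : 0 < t) :
    volume (dyadicCube n t x) = ENNReal.ofReal ((2:ℝ) ^ Int.log 2 t) ^ n := by
  rw [cube_eq x ht, Real.volume_pi_Ico]
  have : ∀ i : Fin n, (2:ℝ) ^ Int.log 2 t * (⌊x i / (2:ℝ) ^ Int.log 2 t⌋ + 1) -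
      (2:ℝ) ^ Int.log 2 t * ⌊x i / (2:ℝ) ^ Int.log 2 t⌋ = (2:ℝ) ^ Int.log 2 t := fun i => by ring
  simp only [this]
  rw [Finset.prod_const, Finset.card_univ, Fintype.card_fin]

lemma cube_meas (ht : 0 < t) : MeasurableSet (dyadicCube n t x) := by
  rw [cube_eq x ht]
  exact MeasurableSet.univ_pi fun i => measurableSet_Ico

lemma cube_subset (ht : 0 < t) : dyadicCube n t x ⊆ ball x t := by
  intro y hy
  have hh : (0:ℝ) < (2:ℝ) ^ Int.log 2 t := zpow_pos (by norm_num) _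
  have hht : (2:ℝ) ^ Int.log 2 t ≤ t := Int.zpow_log_le_self (by norm_num) ht
  set h : ℝ := (2:ℝ) ^ Int.log 2 t
  rw [mem_ball, dist_pi_lt_iff ht]
  intro i
  have h1 : |x i / h - y i / h| < 1 := Int.abs_sub_lt_one_of_floor_eq_floor (hy i)
  have h2 : x i - y i = (x i / h - y i / h) * h := by field_simp
  have h3 : |x i - y i| < h := by
    rw [h2, abs_mul, abs_of_pos hh]
    calc |x i / h - y i / h| * h < 1 * h := (mul_lt_mul_of_pos_right h1 hh)
      _ = h := one_mul h
  rw [Real.dist_eq, abs_sub_comm]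
  exact h3.trans_le hht

lemma cube_mem : x ∈ dyadicCube n t x := fun i => rfl

end cube

lemma E_term {n : ℕ} (g : (Fin n → ℝ) → ℝ) (hg : Differentiable ℝ g)
    (hgl : MeasureTheory.LocallyIntegrable g) (x : Fin n → ℝ) {t : ℝ} (ht : 0 < t) :
    ENNReal.ofReal |(⨍ y in dyadicCube n t x, g y) - g x| ≤
      ENNReal.ofReal (4^n * t) * hlMax n (fun y => ‖fderiv ℝ g y‖) x := by
  have hh : (0:ℝ) < (2:ℝ) ^ Int.log 2 t := zpow_pos (by norm_num) _
  have hht : (2:ℝ) ^ Int.log 2 t ≤ t := Int.zpow_log_le_self (by norm_num) ht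
  have hth : t < 2 * (2:ℝ) ^ Int.log 2 t := by
    have h2 := Int.lt_zpow_succ_log_self (b := 2) (by norm_num) t
    have h3 : ((2:ℕ):ℝ) ^ (Int.log 2 t + 1) = 2 * 2 ^ Int.log 2 t := by
      push_cast
      rw [zpow_add_one₀ (by norm_num : (2:ℝ) ≠ 0)]
      ring
    rwa [h3] at h2
  set h : ℝ := (2:ℝ) ^ Int.log 2 t with hdef
  set Q := dyadicCube n t x with hQdef
  set M := hlMax n (fun y => ‖fderiv ℝ g y‖) x with hM_def
  have hQvol : volume Q = ENNReal.ofReal (h^n) := by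
    rw [hQdef, cube_vol x ht, ENNReal.ofReal_pow hh.le]
  have hQ0 : volume Q ≠ 0 := by
    rw [hQvol]
    simp only [ne_eq, ENNReal.ofReal_eq_zero, not_le]
    positivity
  have hQtop : volume Q ≠ ⊤ := by rw [hQvol]; exact ofReal_ne_top
  have hQsub : Q ⊆ ball x t := cube_subset x ht
  have hgQ : IntegrableOn g Q :=
    (hgl.integrableOn_isCompact (isCompact_closedBall x t)).mono_set
      (hQsub.trans ball_subset_closedBall)
  have hvolR : 0 < (volume Q).toReal := ENNReal.toReal_pos hQ0 hQtop
  -- rewrite the average difference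
  have hEavg : (⨍ y in Q, g y) - g x = (volume Q).toReal⁻¹ • ∫ y in Q, (g y - g x) := by
    rw [integral_sub hgQ (integrableOn_const hQtop),
      setIntegral_const, measureReal_def, smul_sub, setAverage_eq]
    congr 1
    rw [smul_eq_mul, smul_eq_mul]
    field_simp
  rw [hEavg]
  have step1 : ENNReal.ofReal |(volume Q).toReal⁻¹ • ∫ y in Q, (g y - g x)| ≤
      (volume Q)⁻¹ * ∫⁻ y in Q, ENNReal.ofReal |g y - g x| := by
    rw [smul_eq_mul, abs_mul, abs_of_nonneg (inv_nonneg.mpr ENNReal.toReal_nonneg),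
      ENNReal.ofReal_mul (inv_nonneg.mpr ENNReal.toReal_nonneg)]
    refine mul_le_mul' (le_of_eq ?_) ?_
    · rw [← ENNReal.toReal_inv, ENNReal.ofReal_toReal (ENNReal.inv_ne_top.mpr hQ0)]
    · calc ENNReal.ofReal |∫ y in Q, (g y - g x)| = (‖∫ y in Q, (g y - g x)‖₊ : ℝ≥0∞) := by
            rw [← enorm_eq_nnnorm, ← ofReal_norm, Real.norm_eq_abs]
        _ ≤ ∫⁻ y in Q, (‖g y - g x‖₊ : ℝ≥0∞) := enorm_integral_le_lintegral_enorm _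
        _ = ∫⁻ y in Q, ENNReal.ofReal |g y - g x| := by
            congr 1; ext y; rw [← enorm_eq_nnnorm, ← ofReal_norm, Real.norm_eq_abs]
  refine step1.trans ?_
  have step2 : ∫⁻ y in Q, ENNReal.ofReal |g y - g x| ≤ ENNReal.ofReal (t * (2*t)^n) * M :=
    (lintegral_mono_set hQsub).trans (max_bound g hg x ht)
  calc (volume Q)⁻¹ * ∫⁻ y in Q, ENNReal.ofReal |g y - g x|
      = (∫⁻ y in Q, ENNReal.ofReal |g y - g x|) / volume Q := by
        rw [ENNReal.div_eq_inv_mul]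
    _ ≤ ENNReal.ofReal (4^n * t) * M := by
        rw [ENNReal.div_le_iff hQ0 hQtop]
        refine step2.trans ?_
        rw [hQvol]
        have hre : ENNReal.ofReal (4^n*t) * M * ENNReal.ofReal (h^n)
            = ENNReal.ofReal (4^n*t*(h^n)) * M := by
          rw [show (4:ℝ)^n*t*(h^n) = (4^n*t)*(h^n) by ring,
            ENNReal.ofReal_mul (by positivity : (0:ℝ) ≤ 4^n*t)]
          ring
        rw [hre]
        refine mul_le_mul' (ENNReal.ofReal_le_ofReal ?_) le_rfl
        have key : (2*t)^n = 4^n * (t/2)^n := by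
          rw [show (2:ℝ)*t = 4*(t/2) by ring, mul_pow]
        have h1 : (t/2)^n ≤ h^n := pow_le_pow_left₀ (by positivity) (by linarith) n
        calc t * (2*t)^n = 4^n * t * (t/2)^n := by rw [key]; ring
          _ ≤ 4^n * t * h^n := mul_le_mul_of_nonneg_left h1 (by positivity)
          _ = 4^n*t*(h^n) := rfl

lemma P_term {n : ℕ} (φ : (Fin n → ℝ) → ℝ) (Cφ : ℝ) (hCφ : 0 < Cφ)
    (hφmeas : Measurable φ) (hφbdd : ∀ z, |φ z| ≤ Cφ)
    (hφsupp : ∀ z, Cφ ≤ ‖z‖ → φ z = 0) (hφint : ∫ z, φ z = 1)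
    (g : (Fin n → ℝ) → ℝ) (hg : Differentiable ℝ g)
    (hgl : MeasureTheory.LocallyIntegrable g) (x : Fin n → ℝ) {t : ℝ} (ht : 0 < t) :
    ENNReal.ofReal |(∫ y, t ^ (-(n : ℝ)) * φ (t⁻¹ • (x - y)) * g y) - g x| ≤
      ENNReal.ofReal (Cφ^2 * (2*Cφ)^n * t) * hlMax n (fun y => ‖fderiv ℝ g y‖) x := by
  set M := hlMax n (fun y => ‖fderiv ℝ g y‖) x with hM_def
  have htn : (0:ℝ) < t^n := pow_pos ht n
  have ht0 : t ^ (-(n:ℝ)) = (t^n)⁻¹ := by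
    rw [← Real.rpow_natCast t n, ← Real.rpow_neg ht.le]
  have hKmeas : Measurable (fun y => t ^ (-(n:ℝ)) * φ (t⁻¹ • (x - y))) :=
    (hφmeas.comp (by fun_prop)).const_mul _
  have hsupp0 : ∀ y : Fin n → ℝ, Cφ * t ≤ dist y x → φ (t⁻¹ • (x - y)) = 0 := by
    intro y hy
    refine hφsupp _ ?_
    have hnorm : ‖t⁻¹ • (x - y)‖ = t⁻¹ * dist y x := by
      rw [norm_smul, Real.norm_eq_abs, abs_of_pos (inv_pos.mpr ht), ← dist_eq_norm, dist_comm]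
    rw [hnorm]
    calc Cφ = t⁻¹ * (Cφ * t) := by field_simp
      _ ≤ t⁻¹ * dist y x := mul_le_mul_of_nonneg_left hy (inv_nonneg.mpr ht.le)
  have hKbd : ∀ y : Fin n → ℝ, |t ^ (-(n:ℝ)) * φ (t⁻¹ • (x - y))| ≤ (t^n)⁻¹ * Cφ := by
    intro y
    rw [ht0, abs_mul, abs_of_nonneg (inv_nonneg.mpr htn.le)]
    exact mul_le_mul_of_nonneg_left (hφbdd _) (inv_nonneg.mpr htn.le)
  have hgm := hgl.aestronglyMeasurable
  -- integral of the kernel is 1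
  have hK1 : (∫ y, t ^ (-(n:ℝ)) * φ (t⁻¹ • (x - y))) = 1 := by
    rw [integral_const_mul]
    have hsub : (∫ y, φ (t⁻¹ • (x - y))) = ∫ y, φ (t⁻¹ • y) := by
      exact (Measure.measurePreserving_sub_left volume x).integral_comp
        (MeasurableEquiv.subLeft x).measurableEmbedding (fun y => φ (t⁻¹ • y))
    rw [hsub, Measure.integral_comp_inv_smul_of_nonneg volume φ ht.le, hφint, smul_eq_mul,
      mul_one, ht0]
    have hfr : Module.finrank ℝ (Fin n → ℝ) = n := by simp [Module.finrank_pi]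
    rw [hfr, inv_mul_cancel₀ htn.ne']
  -- integrability of the kernel and of kernel * g
  have hKint : Integrable (fun y => t ^ (-(n:ℝ)) * φ (t⁻¹ • (x - y))) := by
    refine Integrable.mono'
      (g := (closedBall x (Cφ*t)).indicator fun _ => (t^n)⁻¹ * Cφ) ?_
      hKmeas.aestronglyMeasurable (Filter.Eventually.of_forall fun y => ?_)
    · exact (integrableOn_const measure_closedBall_lt_top.ne).integrable_indicator
        measurableSet_closedBall
    · by_cases hy : y ∈ closedBall x (Cφ*t)
      · rw [Set.indicator_of_mem hy, Real.norm_eq_abs]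
        exact hKbd y
      · rw [Set.indicator_of_notMem hy, Real.norm_eq_abs, mem_closedBall, not_le] at *
        rw [hsupp0 y hy.le, mul_zero, abs_zero]
  have hKg : Integrable (fun y => t ^ (-(n:ℝ)) * φ (t⁻¹ • (x - y)) * g y) := by
    refine Integrable.mono'
      (g := (closedBall x (Cφ*t)).indicator fun y => (t^n)⁻¹ * Cφ * |g y|) ?_
      (hKmeas.aestronglyMeasurable.mul hgm) (Filter.Eventually.of_forall fun y => ?_)
    · exact IntegrableOn.integrable_indicator
        ((hgl.integrableOn_isCompact (isCompact_closedBall x (Cφ*t))).abs.const_mul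
          ((t^n)⁻¹ * Cφ)) measurableSet_closedBall
    · by_cases hy : y ∈ closedBall x (Cφ*t)
      · rw [Set.indicator_of_mem hy, Real.norm_eq_abs, abs_mul]
        exact mul_le_mul_of_nonneg_right (hKbd y) (abs_nonneg _)
      · rw [Set.indicator_of_notMem hy, mem_closedBall, not_le] at *
        rw [Real.norm_eq_abs, hsupp0 y hy.le, mul_zero, zero_mul, abs_zero]
  -- subtract g x
  have hPsub : (∫ y, t ^ (-(n:ℝ)) * φ (t⁻¹ • (x - y)) * g y) - g x
      = ∫ y, t ^ (-(n:ℝ)) * φ (t⁻¹ • (x - y)) * (g y - g x) := by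
    have : (fun y => t ^ (-(n:ℝ)) * φ (t⁻¹ • (x - y)) * (g y - g x))
        = fun y => t ^ (-(n:ℝ)) * φ (t⁻¹ • (x - y)) * g y
          - t ^ (-(n:ℝ)) * φ (t⁻¹ • (x - y)) * g x := by
      funext y; ring
    rw [this, integral_sub hKg (hKint.mul_const (g x)), integral_mul_const, hK1, one_mul]
  rw [hPsub]
  have hc0 : (0:ℝ) ≤ (t^n)⁻¹ * Cφ := mul_nonneg (inv_nonneg.mpr htn.le) hCφ.le
  calc ENNReal.ofReal |∫ y, t ^ (-(n:ℝ)) * φ (t⁻¹ • (x - y)) * (g y - g x)|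
      = (‖∫ y, t ^ (-(n:ℝ)) * φ (t⁻¹ • (x - y)) * (g y - g x)‖₊ : ℝ≥0∞) := by
        rw [← enorm_eq_nnnorm, ← ofReal_norm, Real.norm_eq_abs]
    _ ≤ ∫⁻ y, (‖t ^ (-(n:ℝ)) * φ (t⁻¹ • (x - y)) * (g y - g x)‖₊ : ℝ≥0∞) :=
        enorm_integral_le_lintegral_enorm _
    _ ≤ ∫⁻ y, (ball x (Cφ*t)).indicator
          (fun y => ENNReal.ofReal ((t^n)⁻¹*Cφ) * ENNReal.ofReal |g y - g x|) y := by
        refine lintegral_mono fun y => ?_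
        by_cases hy : y ∈ ball x (Cφ*t)
        · rw [Set.indicator_of_mem hy, ← enorm_eq_nnnorm, ← ofReal_norm, Real.norm_eq_abs, abs_mul,
            ← ENNReal.ofReal_mul hc0]
          exact ENNReal.ofReal_le_ofReal
            (mul_le_mul_of_nonneg_right (hKbd y) (abs_nonneg _))
        · rw [Set.indicator_of_notMem hy]
          rw [mem_ball, not_lt] at hy
          simp [hsupp0 y hy]
    _ = ENNReal.ofReal ((t^n)⁻¹*Cφ) * ∫⁻ y in ball x (Cφ*t), ENNReal.ofReal |g y - g x| := by
        rw [lintegral_indicator measurableSet_ball, lintegral_const_mul' _ _ ofReal_ne_top]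
    _ ≤ ENNReal.ofReal ((t^n)⁻¹*Cφ) * (ENNReal.ofReal ((Cφ*t) * (2*(Cφ*t))^n) * M) :=
        mul_le_mul' le_rfl (max_bound g hg x (mul_pos hCφ ht))
    _ = ENNReal.ofReal (Cφ^2 * (2*Cφ)^n * t) * M := by
        rw [← mul_assoc, ← ENNReal.ofReal_mul hc0]
        congr 2
        rw [show (2:ℝ)*(Cφ*t) = (2*Cφ)*t by ring, mul_pow]
        field_simp

/-- Comparison of the dyadic averaging operator `E_t` with a compactly supported
approximate identity `P_t`: `|(E_t - P_t)g(x)| ≤ C' t ℳ(|∇g|)(x)`. -/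
theorem stmt_9 (n : ℕ) (hn : 0 < n)
    (φ : (Fin n → ℝ) → ℝ) (Cφ : ℝ) (hCφ : 0 < Cφ)
    (hφmeas : Measurable φ) (hφbdd : ∀ z, |φ z| ≤ Cφ)
    (hφsupp : ∀ z, Cφ ≤ ‖z‖ → φ z = 0)
    (hφint : ∫ z, φ z = 1) :
    ∃ C' : ℝ, 0 < C' ∧
      ∀ g : (Fin n → ℝ) → ℝ, Differentiable ℝ g →
        MeasureTheory.LocallyIntegrable g →
        MeasureTheory.LocallyIntegrable (fun y => ‖fderiv ℝ g y‖) →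
        ∀ᵐ x, ∀ t : ℝ, 0 < t →
          ENNReal.ofReal
              |(⨍ y in dyadicCube n t x, g y) -
                ∫ y, t ^ (-(n : ℝ)) * φ (t⁻¹ • (x - y)) * g y| ≤
            ENNReal.ofReal (C' * t) * hlMax n (fun y => ‖fderiv ℝ g y‖) x := by
  refine ⟨4^n + Cφ^2*(2*Cφ)^n, by positivity, ?_⟩
  intro g hg hgl _hgd
  refine Filter.Eventually.of_forall fun x => ?_
  intro t ht
  have hE := E_term g hg hgl x ht
  have hP := P_term φ Cφ hCφ hφmeas hφbdd hφsupp hφint g hg hgl x ht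
  set M := hlMax n (fun y => ‖fderiv ℝ g y‖) x with hM
  set A := ⨍ y in dyadicCube n t x, g y with hA
  set P := ∫ y, t ^ (-(n:ℝ)) * φ (t⁻¹ • (x - y)) * g y with hPd
  calc ENNReal.ofReal |A - P| ≤ ENNReal.ofReal (|A - g x| + |P - g x|) := by
        refine ENNReal.ofReal_le_ofReal ?_
        calc |A - P| ≤ |A - g x| + |g x - P| := abs_sub_le A (g x) P
          _ = |A - g x| + |P - g x| := by rw [abs_sub_comm (g x) P]
    _ = ENNReal.ofReal |A - g x| + ENNReal.ofReal |P - g x| :=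
        ENNReal.ofReal_add (abs_nonneg _) (abs_nonneg _)
    _ ≤ ENNReal.ofReal (4^n * t) * M + ENNReal.ofReal (Cφ^2*(2*Cφ)^n * t) * M :=
        add_le_add hE hP
    _ = ENNReal.ofReal ((4^n + Cφ^2*(2*Cφ)^n) * t) * M := by
        rw [← add_mul, ← ENNReal.ofReal_add (by positivity) (by positivity)]
        congr 2
        ring
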